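/- Fix m ≥ 2. Consider the following game against a hidden bijection π : Fin m → Fin m (π(i) is the value stored at position i): a query is a nonempty subset S ⊆ Fin m, and the answer to query S is the unique position in S at which π attains its maximum over S. A deterministic strategy is a function that, given the finite sequence of answers received so far, either outputs the next query, or stops and outputs a guess g ∈ Fin m. Then every deterministic strategy that stops after at most m − 2 queries fails on some input: there exists a bijection π of Fin m such that the strategy's guess g, when played against π, satisfies π(g) ≠ min of the values, i.e., g is not the position of the minimum element. -/
import Mathlib


/-- The answer to a query `S` against the hidden assignment `π` of values to positions:
the position in `S` at which `π` attains its maximum over `S` (it is unique when `π` is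
injective on a nonempty `S`); `none` if no such position exists. -/
noncomputable def gameAnswer {m : ℕ} (π : Fin m → Fin m) (S : Finset (Fin m)) :
    Option (Fin m) :=
  if h : ∃ i, i ∈ S ∧ ∀ j ∈ S, π j ≤ π i then some h.choose else none

/-- The history of answers received by the deterministic strategy `strat` after `k` rounds
of interaction against the hidden assignment `π`.  In each round, the strategy, given the
answers so far, either outputs the next query (`Sum.inl S`) — and the answer to `S` is
appended to the history — or stops with a guess (`Sum.inr g`), after which the history no
longer changes. -/
noncomputable def gameHist {m : ℕ} (strat : List (Fin m) → Finset (Fin m) ⊕ Fin m)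
    (π : Fin m → Fin m) : ℕ → List (Fin m)
  | 0 => []
  | k + 1 =>
    match strat (gameHist strat π k) with
    | Sum.inl S => gameHist strat π k ++ (gameAnswer π S).toList
    | Sum.inr _ => gameHist strat π k


lemma gameAnswer_exists {m : ℕ} (π : Fin m → Fin m) {S : Finset (Fin m)} (hS : S.Nonempty) :
    ∃ a, gameAnswer π S = some a := by
  obtain ⟨b, hb, hmax⟩ := S.exists_max_image π hS
  exact ⟨_, by rw [gameAnswer, dif_pos ⟨b, hb, hmax⟩]⟩

lemma gameAnswer_spec {m : ℕ} {π : Fin m → Fin m} {S : Finset (Fin m)} {a : Fin m}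
    (h : gameAnswer π S = some a) : a ∈ S ∧ ∀ j ∈ S, π j ≤ π a := by
  unfold gameAnswer at h
  split at h
  · next hex => cases h; exact hex.choose_spec
  · simp at h

lemma gameAnswer_eq_some {m : ℕ} {π : Fin m → Fin m} {S : Finset (Fin m)} {a : Fin m}
    (ha : a ∈ S) (h : ∀ j ∈ S, j ≠ a → π j < π a) : gameAnswer π S = some a := by
  have hex : ∃ i, i ∈ S ∧ ∀ j ∈ S, π j ≤ π i := by
    refine ⟨a, ha, fun j hj => ?_⟩
    rcases eq_or_ne j a with rfl | hne
    · exact le_refl _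
    · exact (h j hj hne).le
  rw [gameAnswer, dif_pos hex]
  congr 1
  obtain ⟨hc1, hc2⟩ := hex.choose_spec
  by_contra hne
  exact absurd (hc2 a ha) (not_le.mpr (h _ hc1 hne))

lemma gameHist_length {m : ℕ} (strat : List (Fin m) → Finset (Fin m) ⊕ Fin m)
    (π : Fin m → Fin m) : ∀ k, (gameHist strat π k).length ≤ k := by
  intro k
  induction k with
  | zero => simp [gameHist]
  | succ k ih =>
    cases hs : strat (gameHist strat π k) with
    | inl S =>
      rw [gameHist, hs]
      simp only [List.length_append]
      have : (gameAnswer π S).toList.length ≤ 1 := by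
        cases gameAnswer π S <;> simp
      omega
    | inr g => rw [gameHist, hs]; dsimp only; omega

lemma gameHist_prefix {m : ℕ} (strat : List (Fin m) → Finset (Fin m) ⊕ Fin m)
    (π : Fin m → Fin m) {k n : ℕ} (hkn : k ≤ n) :
    gameHist strat π k <+: gameHist strat π n := by
  induction n with
  | zero => simp_all
  | succ n ih =>
    rcases Nat.lt_or_ge k (n+1) with h | h
    · refine (ih (by omega)).trans ?_
      cases hs : strat (gameHist strat π n) with
      | inl S => rw [gameHist, hs]; exact List.prefix_append _ _
      | inr g => rw [gameHist, hs]
    · have : k = n + 1 := by omega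
      subst this; exact List.prefix_refl _

/--
Fix `m ≥ 2`.  Consider the game against a hidden bijection
`π : Fin m → Fin m` where a query is a nonempty subset `S ⊆ Fin m` and the answer is the
unique position of `S` at which `π` attains its maximum over `S`.  A deterministic
strategy maps each finite sequence of received answers either to the next query or to a
final guess.  Then every deterministic strategy that always queries nonempty sets and,
against every bijection, stops with a guess after at most `m − 2` queries, fails on some
input: there exists a bijection `π` such that the strategy's guess `g` against `π` is not
the position of the minimum element, i.e. some position carries a strictly smaller value.
-/
theorem exists_hidden_perm_fooling_short_strategy
    (m : ℕ) (hm : 2 ≤ m)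
    (strat : List (Fin m) → Finset (Fin m) ⊕ Fin m)
    (hque : ∀ h S, strat h = Sum.inl S → S.Nonempty)
    (hstop : ∀ π : Equiv.Perm (Fin m), ∃ g : Fin m,
      strat (gameHist strat (⇑π) (m - 2)) = Sum.inr g) :
    ∃ π : Equiv.Perm (Fin m), ∀ g : Fin m,
      strat (gameHist strat (⇑π) (m - 2)) = Sum.inr g → ∃ j, π j < π g := by
  set π₀ : Equiv.Perm (Fin m) := 1 with hπ₀def
  obtain ⟨g₀, hg₀⟩ := hstop π₀
  by_cases h0 : ∃ j, π₀ j < π₀ g₀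
  · refine ⟨π₀, fun g hg => ?_⟩
    rw [hg₀] at hg
    obtain rfl : g₀ = g := Sum.inr.inj hg
    exact h0
  push_neg at h0
  have hval : (π₀ g₀ : ℕ) = 0 := by
    have h1 := h0 (π₀.symm ⟨0, by omega⟩)
    rw [Equiv.apply_symm_apply] at h1
    have h2 : (π₀ g₀ : ℕ) ≤ 0 := by simpa [Fin.le_def] using h1
    omega
  set H : List (Fin m) := gameHist strat (⇑π₀) (m - 2) with hHdef
  have hex : ∃ c : Fin m, c ∉ H ∧ c ≠ g₀ := by
    by_contra hc
    push_neg at hc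
    have hsub : (Finset.univ : Finset (Fin m)) ⊆ insert g₀ H.toFinset := by
      intro x _
      by_cases h : x ∈ H
      · exact Finset.mem_insert_of_mem (List.mem_toFinset.mpr h)
      · simp [hc x h]
    have h1 := Finset.card_le_card hsub
    have h2 : (insert g₀ H.toFinset).card ≤ H.toFinset.card + 1 := Finset.card_insert_le _ _
    have h3 : H.toFinset.card ≤ H.length := H.toFinset_card_le
    have h4 := gameHist_length strat (⇑π₀) (m - 2)
    rw [← hHdef] at h4
    simp only [Finset.card_univ, Fintype.card_fin] at h1
    omega
  obtain ⟨c, hcH, hcg⟩ := hex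
  set t : ℕ := (π₀ c : ℕ) with htdef
  have htm : t < m := (π₀ c).isLt
  have ht0 : 0 < t := by
    rcases Nat.eq_zero_or_pos t with h | h
    · exact absurd (π₀.injective (Fin.ext (by omega : (π₀ c : ℕ) = (π₀ g₀ : ℕ)))) hcg
    · exact h
  set f : Fin m → Fin m := fun v =>
    if hv : (v : ℕ) = t then ⟨0, by omega⟩
    else if hv2 : (v : ℕ) < t then ⟨(v : ℕ) + 1, by omega⟩
    else v with hfdef
  have hfval : ∀ v : Fin m, (f v : ℕ) =
      if (v : ℕ) = t then 0 else if (v : ℕ) < t then (v : ℕ) + 1 else (v : ℕ) := by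
    intro v
    simp only [hfdef]
    split_ifs <;> rfl
  have hmono : ∀ v w : Fin m, v < w → (w : ℕ) ≠ t → f v < f w := by
    intro v w hvw hwt
    have h1 := hfval v
    have h2 := hfval w
    have h3 : (v : ℕ) < (w : ℕ) := hvw
    rw [Fin.lt_def]
    split_ifs at h1 h2 <;> omega
  have hinj : Function.Injective f := by
    intro v w hvw
    have h1 := hfval v
    have h2 := hfval w
    have h3 : (f v : ℕ) = (f w : ℕ) := by rw [hvw]
    apply Fin.ext
    split_ifs at h1 h2 <;> omega
  set π' : Equiv.Perm (Fin m) :=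
    π₀.trans (Equiv.ofBijective f (Finite.injective_iff_bijective.mp hinj)) with hπ'def
  have hπ' : ∀ x, π' x = f (π₀ x) := fun x => rfl
  have hans : ∀ S a, gameAnswer (⇑π₀) S = some a → a ≠ c → gameAnswer (⇑π') S = some a := by
    intro S a h hac
    obtain ⟨haS, hmax⟩ := gameAnswer_spec h
    refine gameAnswer_eq_some haS fun j hj hja => ?_
    have h1 : π₀ j < π₀ a := lt_of_le_of_ne (hmax j hj) fun he => hja (π₀.injective he)
    have h2 : ((π₀ a : Fin m) : ℕ) ≠ t := fun he => hac (π₀.injective (Fin.ext he))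
    rw [hπ' j, hπ' a]
    exact hmono _ _ h1 h2
  have hhist : ∀ k, k ≤ m - 2 → gameHist strat (⇑π') k = gameHist strat (⇑π₀) k := by
    intro k
    induction k with
    | zero => intro _; rfl
    | succ k ih =>
      intro hk
      have ihk := ih (by omega)
      rw [gameHist, gameHist, ihk]
      cases hs : strat (gameHist strat (⇑π₀) k) with
      | inl S =>
        obtain ⟨a, ha⟩ := gameAnswer_exists (⇑π₀) (hque _ _ hs)
        have haH : a ∈ H := by
          have hpre : gameHist strat (⇑π₀) (k + 1) <+: H := by
            rw [hHdef]; exact gameHist_prefix strat _ hk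
          apply hpre.subset
          rw [gameHist, hs]
          simp [ha]
        have hac : a ≠ c := fun he => hcH (he ▸ haH)
        dsimp only
        rw [ha, hans S a ha hac]
      | inr g => rfl
  refine ⟨π', fun g hg => ?_⟩
  rw [hhist (m - 2) le_rfl, ← hHdef, hg₀] at hg
  obtain rfl : g₀ = g := Sum.inr.inj hg
  refine ⟨c, ?_⟩
  rw [hπ' c, hπ' g₀, Fin.lt_def, hfval, hfval]
  split_ifs <;> omega
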